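/- Let G be undirected, s,t nonadjacent, and let L be the minimum s,t-separator closest to t (i.e., C_t(G−L) ⊆ C_t(G−T) for all minimum s,t-separators T). Then for every x ∈ L, the minimum size of an ({s,x}),t-separator is strictly greater than κ_{s,t}(G). -/

import Mathlib

open SimpleGraph

variable {V : Type*}

/-- `u` can reach `v` in `G − S`: there is a walk whose support avoids `S`. -/
def ReachAvoid (G : SimpleGraph V) (S : Set V) (u v : V) : Prop :=
  ∃ p : G.Walk u v, ∀ w ∈ p.support, w ∉ S

/-- The union of the connected components of `G − S` that meet `X`. -/
def SetReach (G : SimpleGraph V) (S X : Set V) : Set V :=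
  {v | ∃ x ∈ X, ReachAvoid G S x v}

/-- Open neighborhood of a vertex set: vertices outside `X` adjacent to some vertex of `X`. -/
def Nbhd (G : SimpleGraph V) (X : Set V) : Set V :=
  {v | v ∉ X ∧ ∃ x ∈ X, G.Adj x v}

/-- `S` is an `A,B`-separator of `G`. -/
def IsSep (G : SimpleGraph V) (A B S : Set V) : Prop :=
  Disjoint S A ∧ Disjoint S B ∧ ∀ a ∈ A, ∀ b ∈ B, ¬ ReachAvoid G S a b

/-- `S` is an inclusion-minimal `A,B`-separator of `G`. -/
def IsMinlSep (G : SimpleGraph V) (A B S : Set V) : Prop :=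
  IsSep G A B S ∧ ∀ S' ⊂ S, ¬ IsSep G A B S'

/-- `S` is a minimum-cardinality `A,B`-separator of `G`. -/
def IsMinSep (G : SimpleGraph V) (A B S : Set V) : Prop :=
  IsSep G A B S ∧ ∀ S', IsSep G A B S' → S.ncard ≤ S'.ncard

/-- The minimum cardinality of an `A,B`-separator of `G` (`∞` if none exists). -/
noncomputable def kappa (G : SimpleGraph V) (A B : Set V) : ℕ∞ :=
  sInf {n : ℕ∞ | ∃ S : Set V, IsSep G A B S ∧ (S.ncard : ℕ∞) = n}

lemma reachAvoid_symm {G : SimpleGraph V} {S : Set V} {u v : V}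
    (h : ReachAvoid G S u v) : ReachAvoid G S v u := by
  obtain ⟨p, hp⟩ := h
  exact ⟨p.reverse, fun w hw => hp w (by simpa [SimpleGraph.Walk.support_reverse] using hw)⟩

/-- Every vertex of a minimum `{s},{t}`-separator has a neighbor in the `t`-side. -/
lemma exists_nbr_tside {V : Type*} [Fintype V] {G : SimpleGraph V} {s t : V} {L : Set V}
    (hL : IsMinSep G {s} {t} L) {x : V} (hx : x ∈ L) :
    ∃ y, G.Adj x y ∧ y ∈ SetReach G L {t} := by
  classical
  by_contra h
  push_neg at h
  obtain ⟨⟨hds, hdt, hnone⟩, hmin⟩ := hL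
  have hsep' : IsSep G {s} {t} (L \ {x}) := by
    refine ⟨hds.mono_left Set.diff_subset, hdt.mono_left Set.diff_subset, ?_⟩
    rintro a ha b hb ⟨p, hp⟩
    by_cases hxp : x ∈ p.support
    · -- take the portion of the reversed walk up to the first occurrence of x
      have hxr : x ∈ p.reverse.support := by
        simpa [SimpleGraph.Walk.support_reverse] using hxp
      set q := p.reverse.takeUntil x hxr with hq
      have hqcount : q.support.count x = 1 :=
        SimpleGraph.Walk.count_support_takeUntil_eq_one p.reverse hxr
      have hqsub : ∀ w ∈ q.support, w ∉ L \ {x} := by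
        intro w hw
        exact hp w (by
          have := SimpleGraph.Walk.support_takeUntil_subset p.reverse hxr hw
          simpa [SimpleGraph.Walk.support_reverse] using this)
      -- q : Walk t x; reverse it to get a walk from x
      have hxt : x ≠ b := fun hxb => (hdt.ne_of_mem (hxb ▸ hx) hb) rfl
      obtain ⟨y, hadjxy, r, hr⟩ := SimpleGraph.Walk.exists_eq_cons_of_ne hxt q.reverse
      have hrsupp : q.reverse.support = x :: r.support := by
        rw [hr]; simp
      have hxnr : x ∉ r.support := by
        intro hxr'
        have : q.reverse.support.count x = 1 := by
          rw [SimpleGraph.Walk.support_reverse, List.count_reverse]; exact hqcount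
        rw [hrsupp] at this
        simp [List.count_cons] at this
        exact absurd hxr' (List.count_eq_zero.mp this)
      have hrL : ∀ w ∈ r.support, w ∉ L := by
        intro w hw hwL
        have hwq : w ∈ q.support := by
          have : w ∈ q.reverse.support := by rw [hrsupp]; exact List.mem_cons_of_mem _ hw
          simpa [SimpleGraph.Walk.support_reverse] using this
        have := hqsub w hwq
        have hwx : w ≠ x := fun hwx => hxnr (hwx ▸ hw)
        exact this ⟨hwL, hwx⟩
      exact h y hadjxy ⟨b, hb, reachAvoid_symm ⟨r, hrL⟩⟩
    · -- the walk avoids L entirely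
      exact hnone a ha b hb ⟨p, fun w hw => by
        intro hwL
        have hwx : w ≠ x := fun hwx => hxp (hwx ▸ hw)
        exact hp w hw ⟨hwL, hwx⟩⟩
  have hlt : (L \ {x}).ncard < L.ncard :=
    Set.ncard_diff_singleton_lt_of_mem hx (Set.toFinite L)
  exact absurd (hmin _ hsep') (not_le.mpr hlt)

/-- If `L` is the minimum `s,t`-separator closest to `t`, then for every `x ∈ L` the minimum
size of an `{s,x},t`-separator is strictly greater than `κ_{s,t}(G)`. -/
theorem kappa_lt_of_mem_closest {V : Type*} [Fintype V] (G : SimpleGraph V) (s t : V)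
    (hst : s ≠ t) (hadj : ¬ G.Adj s t) (L : Set V) (hL : IsMinSep G {s} {t} L)
    (hclosest : ∀ T, IsMinSep G {s} {t} T → SetReach G L {t} ⊆ SetReach G T {t})
    (x : V) (hx : x ∈ L) :
    kappa G {s} {t} < kappa G {s, x} {t} := by
  classical
  set k := L.ncard with hk
  have h1 : kappa G {s} {t} ≤ (k : ℕ∞) := sInf_le ⟨L, hL.1, rfl⟩
  have h2 : ∀ S : Set V, IsSep G {s, x} {t} S → k < S.ncard := by
    intro S hS
    by_contra hle
    push_neg at hle
    have hSsep : IsSep G {s} {t} S := by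
      obtain ⟨hd1, hd2, hn⟩ := hS
      exact ⟨hd1.mono_right (by simp), hd2, fun a ha b hb =>
        hn a (by simp at ha; simp [ha]) b hb⟩
    have hSmin : IsMinSep G {s} {t} S :=
      ⟨hSsep, fun S' hS' => le_trans hle (hL.2 S' hS')⟩
    obtain ⟨y, hadjxy, hy⟩ := exists_nbr_tside hL hx
    have hy' : y ∈ SetReach G S {t} := hclosest S hSmin hy
    obtain ⟨t', ht', p, hp⟩ := hy'
    rw [Set.mem_singleton_iff] at ht'
    subst ht'
    have hxS : x ∉ S := fun h => (hS.1.ne_of_mem h (by simp : x ∈ ({s, x} : Set V))) rfl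
    have hreach : ReachAvoid G S t' x := by
      refine ⟨p.concat hadjxy.symm, ?_⟩
      intro w hw
      rw [SimpleGraph.Walk.support_concat] at hw
      rcases List.mem_append.mp hw with hw | hw
      · exact hp w hw
      · simp at hw; exact hw ▸ hxS
    exact hS.2.2 x (by simp) t' rfl (reachAvoid_symm hreach)
  have h3 : ((k : ℕ∞) + 1) ≤ kappa G {s, x} {t} := by
    refine le_sInf ?_
    rintro n ⟨S, hS, rfl⟩
    exact_mod_cast Nat.succ_le_of_lt (h2 S hS)
  calc kappa G {s} {t} ≤ (k : ℕ∞) := h1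
    _ < (k : ℕ∞) + 1 := by exact_mod_cast lt_add_one _
    _ ≤ kappa G {s, x} {t} := h3
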